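/- Fix λ > 1. Let a < b be positive integers and 1 ≤ k ≤ a. Let ℛ_{a,b}^k be the a×b rectangle with a k-protuberance attached along the (shorter) side of length a, and let R̄_{a,b}^k be the same rectangle with the k-protuberance attached along the longer side of length b. Then Per_λ(R̄_{a,b}^k) − Per_λ(ℛ_{a,b}^k) = 2k Σ_{r=a+1}^{b} 1/r^λ > 0. -/

import Mathlib

/-- The bi-axial fractional interaction between two lattice sites. -/
noncomputable def biAxialWeight (lam : ℝ) (x y : ℤ × ℤ) : ℝ :=
  if x.1 = y.1 ∧ x.2 ≠ y.2 then 1 / ((|x.2 - y.2| : ℤ) : ℝ) ^ lam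
  else if x.2 = y.2 ∧ x.1 ≠ y.1 then 1 / ((|x.1 - y.1| : ℤ) : ℝ) ^ lam
  else 0

/-- The nonlocal bi-axial perimeter of a polyomino, identified with the finite
set of centers of its unit squares. -/
noncomputable def nonlocalPer (lam : ℝ) (P : Finset (ℤ × ℤ)) : ℝ :=
  ∑ x ∈ P, ∑' y : {y : ℤ × ℤ // y ∉ P}, biAxialWeight lam x (y : ℤ × ℤ)

/-- The a×b rectangle polyomino: b columns (horizontal side b) and a rows
(vertical side a). -/
noncomputable def rectP (a b : ℕ) : Finset (ℤ × ℤ) := Finset.Ico (0 : ℤ) b ×ˢ Finset.Ico (0 : ℤ) a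

/-- The a×b rectangle with a k-protuberance attached along the (shorter)
vertical side of length a. -/
noncomputable def rectProtShort (a b k : ℕ) : Finset (ℤ × ℤ) :=
  rectP a b ∪ ({(b : ℤ)} : Finset ℤ) ×ˢ Finset.Ico (0 : ℤ) k

/-- The a×b rectangle with a k-protuberance attached along the (longer)
horizontal side of length b. -/
noncomputable def rectProtLong (a b k : ℕ) : Finset (ℤ × ℤ) :=
  rectP a b ∪ Finset.Ico (0 : ℤ) k ×ˢ ({(a : ℤ)} : Finset ℤ)

/-! ### Auxiliary kernel -/

noncomputable def gker (lam : ℝ) (d : ℤ) : ℝ := 1 / ((|d| : ℤ) : ℝ) ^ lam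

lemma gker_zero {lam : ℝ} (h : lam ≠ 0) : gker lam 0 = 0 := by
  simp [gker, Real.zero_rpow h]

lemma gker_neg (lam : ℝ) (d : ℤ) : gker lam (-d) = gker lam d := by simp [gker]

lemma gker_nonneg (lam : ℝ) (d : ℤ) : 0 ≤ gker lam d := by
  unfold gker; positivity

lemma summable_gker {lam : ℝ} (h : 1 < lam) : Summable (gker lam) := by
  refine (Real.summable_abs_int_rpow h).congr fun n => ?_
  rw [Real.rpow_neg (abs_nonneg _)]
  simp [gker, one_div]

lemma w_eq {lam : ℝ} (h : lam ≠ 0) (x y : ℤ × ℤ) :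
    biAxialWeight lam x y =
      (if x.1 = y.1 then gker lam (x.2 - y.2) else 0) +
      (if x.2 = y.2 then gker lam (x.1 - y.1) else 0) := by
  unfold biAxialWeight gker
  by_cases h1 : x.1 = y.1 <;> by_cases h2 : x.2 = y.2 <;>
    simp [h1, h2, sub_eq_zero, Real.zero_rpow h]

lemma w_symm {lam : ℝ} (h : lam ≠ 0) (x y : ℤ × ℤ) :
    biAxialWeight lam x y = biAxialWeight lam y x := by
  rw [w_eq h, w_eq h, ← neg_sub x.2 y.2, gker_neg, ← neg_sub x.1 y.1, gker_neg]
  simp only [eq_comm]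

/-! ### Summability and the total interaction of a single site -/

lemma summable_gker_shift {lam : ℝ} (h : 1 < lam) (c : ℤ) :
    Summable (fun t : ℤ => gker lam (c - t)) :=
  ((Equiv.subLeft c).summable_iff (f := gker lam)).2 (summable_gker h)

lemma summable_A {lam : ℝ} (h : 1 < lam) (x : ℤ × ℤ) :
    Summable (fun y : ℤ × ℤ => if x.1 = y.1 then gker lam (x.2 - y.2) else 0) := by
  have base : Summable (fun y : ℤ × ℤ =>
      (if x.1 = y.1 then (1:ℝ) else 0) * gker lam (x.2 - y.2)) := by
    refine Summable.mul_of_nonneg (f := fun t : ℤ => if x.1 = t then (1:ℝ) else 0)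
      (g := fun t : ℤ => gker lam (x.2 - t)) ?_ (summable_gker_shift h x.2) ?_ ?_
    · exact summable_of_ne_finset_zero (s := {x.1}) (by intro b hb; simp at hb; simp [Ne.symm hb])
    · intro t; by_cases ht : x.1 = t <;> simp [ht]
    · intro t; exact gker_nonneg _ _
  refine base.congr fun y => ?_
  by_cases h1 : x.1 = y.1 <;> simp [h1]

lemma summable_B {lam : ℝ} (h : 1 < lam) (x : ℤ × ℤ) :
    Summable (fun y : ℤ × ℤ => if x.2 = y.2 then gker lam (x.1 - y.1) else 0) := by
  have base : Summable (fun y : ℤ × ℤ =>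
      (gker lam (x.1 - y.1)) * (if x.2 = y.2 then (1:ℝ) else 0)) := by
    refine Summable.mul_of_nonneg (f := fun t : ℤ => gker lam (x.1 - t))
      (g := fun t : ℤ => if x.2 = t then (1:ℝ) else 0) (summable_gker_shift h x.1) ?_ ?_ ?_
    · exact summable_of_ne_finset_zero (s := {x.2}) (by intro b hb; simp at hb; simp [Ne.symm hb])
    · intro t; exact gker_nonneg _ _
    · intro t; by_cases ht : x.2 = t <;> simp [ht]
  refine base.congr fun y => ?_
  by_cases h2 : x.2 = y.2 <;> simp [h2]

lemma summable_w {lam : ℝ} (h : 1 < lam) (x : ℤ × ℤ) :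
    Summable (biAxialWeight lam x) := by
  refine ((summable_A h x).add (summable_B h x)).congr fun y => ?_
  exact (w_eq (by linarith) x y).symm

lemma tsum_A {lam : ℝ} (h : 1 < lam) (x : ℤ × ℤ) :
    ∑' y : ℤ × ℤ, (if x.1 = y.1 then gker lam (x.2 - y.2) else 0) = ∑' d : ℤ, gker lam d := by
  rw [Summable.tsum_prod' (summable_A h x) (fun y1 => ?_)]
  · have inner : ∀ y1 : ℤ, ∑' y2 : ℤ, (if x.1 = y1 then gker lam (x.2 - y2) else 0)
        = if y1 = x.1 then (∑' d : ℤ, gker lam d) else 0 := by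
      intro y1
      by_cases h1 : x.1 = y1
      · simp only [h1.symm, if_pos rfl, if_pos]
        exact (Equiv.subLeft x.2).tsum_eq (gker lam)
      · simp [h1, Ne.symm h1]
    simp_rw [inner]
    exact tsum_ite_eq x.1 _
  · by_cases h1 : x.1 = y1
    · simp only [h1, if_pos rfl]; exact (summable_gker_shift h x.2).congr (fun _ => by simp [h1])
    · simp [h1]

lemma tsum_B {lam : ℝ} (h : 1 < lam) (x : ℤ × ℤ) :
    ∑' y : ℤ × ℤ, (if x.2 = y.2 then gker lam (x.1 - y.1) else 0) = ∑' d : ℤ, gker lam d := by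
  rw [Summable.tsum_prod' (summable_B h x) (fun y1 => ?_)]
  · have inner : ∀ y1 : ℤ, ∑' y2 : ℤ, (if x.2 = y2 then gker lam (x.1 - y1) else 0)
        = gker lam (x.1 - y1) := by
      intro y1
      have : ∀ y2 : ℤ, (if x.2 = y2 then gker lam (x.1 - y1) else 0)
          = if y2 = x.2 then gker lam (x.1 - y1) else 0 := fun y2 => by
        by_cases h2 : x.2 = y2 <;> simp [h2, Ne.symm, eq_comm]
      simp_rw [this]
      exact tsum_ite_eq x.2 _
    simp_rw [inner]
    exact (Equiv.subLeft x.1).tsum_eq (gker lam)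
  · exact summable_of_ne_finset_zero (s := {x.2})
      (by intro b hb; simp at hb; simp [Ne.symm hb])

lemma tsum_w {lam : ℝ} (h : 1 < lam) (x : ℤ × ℤ) :
    ∑' y : ℤ × ℤ, biAxialWeight lam x y = 2 * ∑' d : ℤ, gker lam d := by
  have : ∀ y : ℤ × ℤ, biAxialWeight lam x y =
      (if x.1 = y.1 then gker lam (x.2 - y.2) else 0) +
      (if x.2 = y.2 then gker lam (x.1 - y.1) else 0) := w_eq (by linarith) x
  rw [tsum_congr this, Summable.tsum_add (summable_A h x) (summable_B h x), tsum_A h x, tsum_B h x]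
  ring

/-! ### The perimeter formula -/

lemma per_eq {lam : ℝ} (h : 1 < lam) (P : Finset (ℤ × ℤ)) :
    nonlocalPer lam P = (P.card : ℝ) * (2 * ∑' d : ℤ, gker lam d)
      - ∑ x ∈ P, ∑ y ∈ P, biAxialWeight lam x y := by
  unfold nonlocalPer
  have key : ∀ x : ℤ × ℤ,
      (∑' y : {y : ℤ × ℤ // y ∉ P}, biAxialWeight lam x (y : ℤ × ℤ))
        = 2 * (∑' d : ℤ, gker lam d) - ∑ y ∈ P, biAxialWeight lam x y := by
    intro x
    have h1 := Summable.sum_add_tsum_compl (s := P) (f := biAxialWeight lam x) (summable_w h x)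
    rw [tsum_w h x] at h1
    have h2 : (∑' y : ↑((P : Set (ℤ × ℤ)))ᶜ, biAxialWeight lam x ↑y)
        = ∑' y : {y : ℤ × ℤ // y ∉ P}, biAxialWeight lam x (y : ℤ × ℤ) := rfl
    rw [h2] at h1
    linarith
  rw [Finset.sum_congr rfl (fun x _ => key x), Finset.sum_sub_distrib, Finset.sum_const,
    nsmul_eq_mul]

/-! ### Finite sum computations -/

lemma sum_gker_shift (lam : ℝ) (n : ℕ) :
    ∑ r ∈ Finset.Ico (0:ℤ) n, gker lam (r - n) = ∑ j ∈ Finset.Icc 1 n, 1 / (j:ℝ) ^ lam := by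
  refine Finset.sum_nbij' (i := fun r => ((n:ℤ) - r).toNat) (j := fun m => (n:ℤ) - m)
    ?_ ?_ ?_ ?_ ?_
  · intro r hr; simp only [Finset.mem_Ico] at hr; simp only [Finset.mem_Icc]; omega
  · intro m hm; simp only [Finset.mem_Icc] at hm; simp only [Finset.mem_Ico]; omega
  · intro r hr; simp only [Finset.mem_Ico] at hr; omega
  · intro m hm; simp only [Finset.mem_Icc] at hm; omega
  · intro r hr
    simp only [Finset.mem_Ico] at hr
    have h1 : |r - (n:ℤ)| = (n:ℤ) - r := by rw [abs_sub_comm]; exact abs_of_nonneg (by omega)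
    have h2 : ((((n:ℤ) - r).toNat : ℕ) : ℝ) = (((n:ℤ) - r : ℤ) : ℝ) := by
      have := Int.toNat_of_nonneg (show (0:ℤ) ≤ (n:ℤ) - r by omega)
      exact_mod_cast this
    simp only [gker, h1, h2]

lemma cross_col (lam : ℝ) (h : lam ≠ 0) (a b k : ℕ) (hkb : k ≤ b) :
    ∑ x ∈ Finset.Ico (0:ℤ) b ×ˢ Finset.Ico (0:ℤ) a,
      ∑ y ∈ Finset.Ico (0:ℤ) k ×ˢ ({(a:ℤ)} : Finset ℤ), biAxialWeight lam x y
      = (k : ℝ) * ∑ r ∈ Finset.Ico (0:ℤ) a, gker lam (r - a) := by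
  rw [Finset.sum_product]
  have step1 : ∀ c ∈ Finset.Ico (0:ℤ) b, ∀ r ∈ Finset.Ico (0:ℤ) a,
      ∑ y ∈ Finset.Ico (0:ℤ) k ×ˢ ({(a:ℤ)} : Finset ℤ), biAxialWeight lam (c, r) y
        = if c ∈ Finset.Ico (0:ℤ) k then gker lam (r - a) else 0 := by
    intro c _ r hr
    rw [Finset.sum_product]
    simp only [Finset.sum_singleton]
    have hra : r ≠ (a:ℤ) := by simp only [Finset.mem_Ico] at hr; omega
    have : ∀ c' : ℤ, biAxialWeight lam (c, r) (c', (a:ℤ))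
        = if c = c' then gker lam (r - a) else 0 := by
      intro c'; rw [w_eq h]; simp [hra]
    rw [Finset.sum_congr rfl (fun c' _ => this c')]
    exact Finset.sum_ite_eq _ c _
  calc ∑ c ∈ Finset.Ico (0:ℤ) b, ∑ r ∈ Finset.Ico (0:ℤ) a,
        ∑ y ∈ Finset.Ico (0:ℤ) k ×ˢ ({(a:ℤ)} : Finset ℤ), biAxialWeight lam (c, r) y
      = ∑ c ∈ Finset.Ico (0:ℤ) b, ∑ r ∈ Finset.Ico (0:ℤ) a,
          (if c ∈ Finset.Ico (0:ℤ) k then gker lam (r - a) else 0) := by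
        exact Finset.sum_congr rfl fun c hc => Finset.sum_congr rfl fun r hr => step1 c hc r hr
    _ = ∑ c ∈ Finset.Ico (0:ℤ) b,
          (if c ∈ Finset.Ico (0:ℤ) k then ∑ r ∈ Finset.Ico (0:ℤ) a, gker lam (r - a) else 0) := by
        refine Finset.sum_congr rfl fun c _ => ?_
        split <;> simp
    _ = ∑ c ∈ Finset.Ico (0:ℤ) b ∩ Finset.Ico (0:ℤ) k,
          ∑ r ∈ Finset.Ico (0:ℤ) a, gker lam (r - a) := by
        rw [Finset.sum_ite_mem]
    _ = (k : ℝ) * ∑ r ∈ Finset.Ico (0:ℤ) a, gker lam (r - a) := by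
        rw [Finset.inter_eq_right.2 (Finset.Ico_subset_Ico le_rfl (by exact_mod_cast hkb)),
          Finset.sum_const, nsmul_eq_mul]
        congr 1
        simp [Int.card_Ico]

lemma cross_row (lam : ℝ) (h : lam ≠ 0) (a b k : ℕ) (hka : k ≤ a) :
    ∑ x ∈ Finset.Ico (0:ℤ) b ×ˢ Finset.Ico (0:ℤ) a,
      ∑ y ∈ ({(b:ℤ)} : Finset ℤ) ×ˢ Finset.Ico (0:ℤ) k, biAxialWeight lam x y
      = (k : ℝ) * ∑ c ∈ Finset.Ico (0:ℤ) b, gker lam (c - b) := by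
  rw [Finset.sum_product]
  have step1 : ∀ c ∈ Finset.Ico (0:ℤ) b, ∀ r : ℤ,
      ∑ y ∈ ({(b:ℤ)} : Finset ℤ) ×ˢ Finset.Ico (0:ℤ) k, biAxialWeight lam (c, r) y
        = if r ∈ Finset.Ico (0:ℤ) k then gker lam (c - b) else 0 := by
    intro c hc r
    rw [Finset.sum_product]
    simp only [Finset.sum_singleton]
    have hcb : c ≠ (b:ℤ) := by simp only [Finset.mem_Ico] at hc; omega
    have : ∀ r' : ℤ, biAxialWeight lam (c, r) ((b:ℤ), r')
        = if r = r' then gker lam (c - b) else 0 := by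
      intro r'; rw [w_eq h]; simp [hcb]
    rw [Finset.sum_congr rfl (fun r' _ => this r')]
    exact Finset.sum_ite_eq _ r _
  calc ∑ c ∈ Finset.Ico (0:ℤ) b, ∑ r ∈ Finset.Ico (0:ℤ) a,
        ∑ y ∈ ({(b:ℤ)} : Finset ℤ) ×ˢ Finset.Ico (0:ℤ) k, biAxialWeight lam (c, r) y
      = ∑ c ∈ Finset.Ico (0:ℤ) b, ∑ r ∈ Finset.Ico (0:ℤ) a,
          (if r ∈ Finset.Ico (0:ℤ) k then gker lam (c - b) else 0) := by
        exact Finset.sum_congr rfl fun c hc => Finset.sum_congr rfl fun r _ => step1 c hc r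
    _ = ∑ c ∈ Finset.Ico (0:ℤ) b, ∑ r ∈ Finset.Ico (0:ℤ) a ∩ Finset.Ico (0:ℤ) k,
          gker lam (c - b) := by
        exact Finset.sum_congr rfl fun c _ => Finset.sum_ite_mem _ _ _
    _ = (k : ℝ) * ∑ c ∈ Finset.Ico (0:ℤ) b, gker lam (c - b) := by
        rw [Finset.inter_eq_right.2 (Finset.Ico_subset_Ico le_rfl (by exact_mod_cast hka)),
          Finset.mul_sum]
        refine Finset.sum_congr rfl fun c _ => ?_
        rw [Finset.sum_const, nsmul_eq_mul]
        congr 1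
        simp [Int.card_Ico]

lemma self_vert (lam : ℝ) (h : lam ≠ 0) (b k : ℕ) :
    ∑ x ∈ ({(b:ℤ)} : Finset ℤ) ×ˢ Finset.Ico (0:ℤ) k,
      ∑ y ∈ ({(b:ℤ)} : Finset ℤ) ×ˢ Finset.Ico (0:ℤ) k, biAxialWeight lam x y
      = ∑ r ∈ Finset.Ico (0:ℤ) k, ∑ r' ∈ Finset.Ico (0:ℤ) k, gker lam (r - r') := by
  rw [Finset.sum_product]
  simp only [Finset.sum_singleton]
  refine Finset.sum_congr rfl fun r _ => ?_
  rw [Finset.sum_product]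
  simp only [Finset.sum_singleton]
  refine Finset.sum_congr rfl fun r' _ => ?_
  rw [w_eq h]
  by_cases hrr : r = r' <;> simp [hrr, gker_zero h]

lemma self_horiz (lam : ℝ) (h : lam ≠ 0) (a k : ℕ) :
    ∑ x ∈ Finset.Ico (0:ℤ) k ×ˢ ({(a:ℤ)} : Finset ℤ),
      ∑ y ∈ Finset.Ico (0:ℤ) k ×ˢ ({(a:ℤ)} : Finset ℤ), biAxialWeight lam x y
      = ∑ c ∈ Finset.Ico (0:ℤ) k, ∑ c' ∈ Finset.Ico (0:ℤ) k, gker lam (c - c') := by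
  rw [Finset.sum_product]
  refine Finset.sum_congr rfl fun c _ => ?_
  simp only [Finset.sum_singleton]
  rw [Finset.sum_product]
  refine Finset.sum_congr rfl fun c' _ => ?_
  simp only [Finset.sum_singleton]
  rw [w_eq h]
  by_cases hcc : c = c' <;> simp [hcc, gker_zero h]

theorem stmt_15 (lam : ℝ) (hlam : 1 < lam) (a b k : ℕ)
    (hab : a < b) (ha : 1 ≤ a) (hk1 : 1 ≤ k) (hk : k ≤ a) :
    nonlocalPer lam (rectProtLong a b k) - nonlocalPer lam (rectProtShort a b k) =
        2 * k * ∑ r ∈ Finset.Icc (a + 1) b, 1 / (r : ℝ) ^ lam ∧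
      2 * k * ∑ r ∈ Finset.Icc (a + 1) b, 1 / (r : ℝ) ^ lam > 0 := by
  have hlam0 : lam ≠ 0 := by linarith
  have hkb : k ≤ b := le_trans hk (le_of_lt hab)
  -- positivity part
  have hpos : (0:ℝ) < 2 * k * ∑ r ∈ Finset.Icc (a + 1) b, 1 / (r : ℝ) ^ lam := by
    have hsum : (0:ℝ) < ∑ r ∈ Finset.Icc (a + 1) b, 1 / (r : ℝ) ^ lam := by
      refine Finset.sum_pos (fun r hr => ?_) ⟨a + 1, by simp only [Finset.mem_Icc]; omega⟩
      have hr' : (0:ℝ) < (r:ℝ) := by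
        simp only [Finset.mem_Icc] at hr
        have : 0 < r := by omega
        exact_mod_cast this
      exact div_pos one_pos (Real.rpow_pos_of_pos hr' lam)
    have hk' : (0:ℝ) < (k:ℝ) := by exact_mod_cast hk1
    positivity
  -- disjointness
  have hdL : Disjoint (rectP a b) (Finset.Ico (0:ℤ) k ×ˢ ({(a:ℤ)} : Finset ℤ)) := by
    rw [Finset.disjoint_left]
    rintro ⟨c, r⟩ hx hy
    simp only [rectP, Finset.mem_product, Finset.mem_Ico, Finset.mem_singleton] at hx hy
    omega
  have hdS : Disjoint (rectP a b) (({(b:ℤ)} : Finset ℤ) ×ˢ Finset.Ico (0:ℤ) k) := by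
    rw [Finset.disjoint_left]
    rintro ⟨c, r⟩ hx hy
    simp only [rectP, Finset.mem_product, Finset.mem_Ico, Finset.mem_singleton] at hx hy
    omega
  -- cardinalities agree
  have hcard : (rectProtLong a b k).card = (rectProtShort a b k).card := by
    rw [rectProtLong, rectProtShort, Finset.card_union_of_disjoint hdL,
      Finset.card_union_of_disjoint hdS]
    simp [Finset.card_product, Int.card_Ico]
  -- expansion of the double sums over unions
  have expand : ∀ Q : Finset (ℤ × ℤ), Disjoint (rectP a b) Q →
      ∑ x ∈ rectP a b ∪ Q, ∑ y ∈ rectP a b ∪ Q, biAxialWeight lam x y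
        = (∑ x ∈ rectP a b, ∑ y ∈ rectP a b, biAxialWeight lam x y)
          + 2 * (∑ x ∈ rectP a b, ∑ y ∈ Q, biAxialWeight lam x y)
          + (∑ x ∈ Q, ∑ y ∈ Q, biAxialWeight lam x y) := by
    intro Q hd
    have hQR : ∑ x ∈ Q, ∑ y ∈ rectP a b, biAxialWeight lam x y
        = ∑ x ∈ rectP a b, ∑ y ∈ Q, biAxialWeight lam x y := by
      rw [Finset.sum_comm]
      exact Finset.sum_congr rfl fun u _ => Finset.sum_congr rfl fun v _ => w_symm hlam0 v u
    rw [Finset.sum_union hd]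
    have e1 : ∀ x : ℤ × ℤ, ∑ y ∈ rectP a b ∪ Q, biAxialWeight lam x y
        = ∑ y ∈ rectP a b, biAxialWeight lam x y + ∑ y ∈ Q, biAxialWeight lam x y :=
      fun x => Finset.sum_union hd
    simp_rw [e1]
    rw [Finset.sum_add_distrib, Finset.sum_add_distrib, hQR]
    ring
  -- the interaction sums
  have hIL := expand _ hdL
  have hIS := expand _ hdS
  have hcL : ∑ x ∈ rectP a b, ∑ y ∈ Finset.Ico (0:ℤ) k ×ˢ ({(a:ℤ)} : Finset ℤ),
      biAxialWeight lam x y = (k : ℝ) * ∑ j ∈ Finset.Icc 1 a, 1 / (j:ℝ) ^ lam := by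
    rw [rectP, cross_col lam hlam0 a b k hkb, sum_gker_shift]
  have hcS : ∑ x ∈ rectP a b, ∑ y ∈ ({(b:ℤ)} : Finset ℤ) ×ˢ Finset.Ico (0:ℤ) k,
      biAxialWeight lam x y = (k : ℝ) * ∑ j ∈ Finset.Icc 1 b, 1 / (j:ℝ) ^ lam := by
    rw [rectP, cross_row lam hlam0 a b k hk, sum_gker_shift]
  have hself : ∑ x ∈ ({(b:ℤ)} : Finset ℤ) ×ˢ Finset.Ico (0:ℤ) k,
        ∑ y ∈ ({(b:ℤ)} : Finset ℤ) ×ˢ Finset.Ico (0:ℤ) k, biAxialWeight lam x y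
      = ∑ x ∈ Finset.Ico (0:ℤ) k ×ˢ ({(a:ℤ)} : Finset ℤ),
        ∑ y ∈ Finset.Ico (0:ℤ) k ×ˢ ({(a:ℤ)} : Finset ℤ), biAxialWeight lam x y := by
    rw [self_vert lam hlam0 b k, self_horiz lam hlam0 a k]
  -- splitting of the harmonic-type sums
  have hsplit : ∑ j ∈ Finset.Icc 1 b, 1 / (j:ℝ) ^ lam
      = ∑ j ∈ Finset.Icc 1 a, 1 / (j:ℝ) ^ lam
        + ∑ j ∈ Finset.Icc (a + 1) b, 1 / (j:ℝ) ^ lam := by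
    rw [show Finset.Icc 1 b = Finset.Ioc 0 b from Finset.Icc_add_one_left_eq_Ioc 0 b,
      show Finset.Icc 1 a = Finset.Ioc 0 a from Finset.Icc_add_one_left_eq_Ioc 0 a,
      show Finset.Icc (a + 1) b = Finset.Ioc a b from Finset.Icc_add_one_left_eq_Ioc a b]
    exact (Finset.sum_Ioc_consecutive _ (Nat.zero_le a) (le_of_lt hab)).symm
  -- final computation
  refine ⟨?_, hpos⟩
  rw [per_eq hlam, per_eq hlam, rectProtLong, rectProtShort, hIL, hIS, hcL, hcS]
  rw [← rectProtLong, ← rectProtShort, hcard, hself, hsplit]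
  ring
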